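/- The set 𝒞₃,₃(Q₂) of 3×3 communication matrices implementable with a qubit is not convex: there exist C, C′ implementable with qubit states and POVMs such that (C+C′)/2 is not qubit-implementable. -/

import Mathlib

open Matrix BigOperators
open scoped ComplexOrder

/-- A quantum (dimension-d) implementation of a communication matrix `C`:
states `ρ` are density matrices, `M` is a POVM, and `C a b = tr(ρ_a M(b))`. -/
def QImpl {d n m : ℕ} (C : Matrix (Fin n) (Fin m) ℝ)
    (ρ : Fin n → Matrix (Fin d) (Fin d) ℂ) (M : Fin m → Matrix (Fin d) (Fin d) ℂ) : Prop :=
  (∀ a, (ρ a).PosSemidef) ∧ (∀ a, (ρ a).trace = 1) ∧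
  (∀ b, (M b).PosSemidef) ∧ (∑ b, M b) = 1 ∧
  ∀ a b, (C a b : ℂ) = (ρ a * M b).trace
/-- A matrix is qubit-implementable if it has a quantum implementation in dimension 2. -/
def QubitImplementable {n m : ℕ} (C : Matrix (Fin n) (Fin m) ℝ) : Prop :=
  ∃ (ρ : Fin n → Matrix (Fin 2) (Fin 2) ℂ) (M : Fin m → Matrix (Fin 2) (Fin 2) ℂ),
    QImpl C ρ M

open ComplexConjugate in
lemma quad_nonneg (a b c r0 i0 r1 i1 : ℝ) (ha : 0 ≤ a) (hc : 0 ≤ c) (h : b^2 ≤ a*c) :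
    0 ≤ a*(r0^2+i0^2) + 2*b*(r0*r1+i0*i1) + c*(r1^2+i1^2) := by
  rcases eq_or_lt_of_le ha with h0 | h0
  · have hb : b = 0 := by nlinarith
    subst hb
    nlinarith [sq_nonneg r1, sq_nonneg i1]
  · nlinarith [sq_nonneg (a*r0+b*r1), sq_nonneg (a*i0+b*i1),
      mul_nonneg (sub_nonneg.2 h) (add_nonneg (sq_nonneg r1) (sq_nonneg i1))]

lemma psd2 (a b c : ℝ) (ha : 0 ≤ a) (hc : 0 ≤ c) (h : b^2 ≤ a*c) :
    (!![(a:ℂ), (b:ℂ); (b:ℂ), (c:ℂ)]).PosSemidef := by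
  refine Matrix.PosSemidef.of_dotProduct_mulVec_nonneg ?_ ?_
  · ext i j
    fin_cases i <;> fin_cases j <;> simp [Matrix.conjTranspose_apply]
  · intro x
    have hx : star x ⬝ᵥ (!![(a:ℂ), (b:ℂ); (b:ℂ), (c:ℂ)]).mulVec x
        = (a:ℂ) * (star (x 0) * x 0) + (b:ℂ) * (star (x 0) * x 1 + star (x 1) * x 0)
          + (c:ℂ) * (star (x 1) * x 1) := by
      simp [Matrix.mulVec, dotProduct, Fin.sum_univ_two]
      ring
    rw [hx, Complex.le_def]
    constructor
    · simp only [Complex.add_re, Complex.mul_re, Complex.ofReal_re, Complex.ofReal_im,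
        Complex.mul_im, Complex.add_im, RingHom.coe_coe, Complex.conj_re, Complex.conj_im,
        Complex.zero_re, star]
      nlinarith [quad_nonneg a b c (x 0).re (x 0).im (x 1).re (x 1).im ha hc h]
    · simp only [Complex.add_im, Complex.mul_im, Complex.mul_re, Complex.ofReal_re,
        Complex.ofReal_im, RingHom.coe_coe, Complex.conj_re, Complex.conj_im,
        Complex.zero_im, star]
      ring

open ComplexConjugate in
lemma psd_facts (P : Matrix (Fin 2) (Fin 2) ℂ) (h : P.PosSemidef) :
    P 1 0 = conj (P 0 1) ∧ (P 0 0).im = 0 ∧ (P 1 1).im = 0 ∧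
    0 ≤ (P 0 0).re ∧ 0 ≤ (P 1 1).re ∧
    (P 0 1).re^2 + (P 0 1).im^2 ≤ (P 0 0).re * (P 1 1).re := by
  have h10 : P 1 0 = conj (P 0 1) := by
    have := congrFun (congrFun h.1.symm 1) 0
    simpa [Matrix.conjTranspose_apply] using this
  have e0 := h.dotProduct_mulVec_nonneg ![1, 0]
  have e1 := h.dotProduct_mulVec_nonneg ![0, 1]
  simp [dotProduct, Matrix.mulVec, Fin.sum_univ_two, Complex.le_def] at e0 e1
  refine ⟨h10, e0.2.symm, e1.2.symm, e0.1, e1.1, ?_⟩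
  have e2 := h.dotProduct_mulVec_nonneg ![P 1 1, -(P 1 0)]
  have e3 := h.dotProduct_mulVec_nonneg ![P 0 1, -(P 0 0)]
  have e4 := h.dotProduct_mulVec_nonneg ![P 0 1, -1]
  simp [dotProduct, Matrix.mulVec, Fin.sum_univ_two, Complex.le_def, h10,
    ← e0.2, ← e1.2] at e2 e3 e4
  set a := (P 0 0).re
  set d := (P 1 1).re
  set x := (P 0 1).re
  set y := (P 0 1).im
  have F2 : 0 ≤ d * (a*d - (x^2+y^2)) := by nlinarith [e2.1]
  have F3 : 0 ≤ a * (a*d - (x^2+y^2)) := by nlinarith [e3.1]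
  have F4 : 0 ≤ a*(x^2+y^2) - 2*(x^2+y^2) + d := by nlinarith [e4.1]
  rcases le_or_gt (x^2+y^2) (a*d) with hc | hc
  · exact hc
  · have ha0 : a ≤ 0 := by nlinarith
    have hd0 : d ≤ 0 := by nlinarith
    have ha : a = 0 := le_antisymm ha0 e0.1
    have hd : d = 0 := le_antisymm hd0 e1.1
    rw [ha, hd] at F4 ⊢
    nlinarith [sq_nonneg x, sq_nonneg y]

lemma key (a d m s x y u v : ℝ)
    (had : a + d = 1) (hz : x^2+y^2 ≤ a*d) (hw : u^2+v^2 ≤ m*s)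
    (h0 : a*m + d*s + 2*(x*u+y*v) = 0) :
    m = (m+s)*d ∧ s = (m+s)*a ∧ u = -((m+s)*x) ∧ v = -((m+s)*y) := by
  have hN : 0 ≤ x^2+y^2 := by positivity
  have hW : 0 ≤ u^2+v^2 := by positivity
  have hCS : (x*u+y*v)^2 ≤ (x^2+y^2)*(u^2+v^2) := by nlinarith [sq_nonneg (x*v-y*u)]
  have hAD : 0 ≤ a*d := le_trans hN hz
  have hMS : 0 ≤ m*s := le_trans hW hw
  have ht2 : (x*u+y*v)^2 ≤ (a*d)*(m*s) := by nlinarith [mul_le_mul hz hw hW hAD]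
  have h2t : a*m + d*s = -(2*(x*u+y*v)) := by linarith
  have hsq : (a*m+d*s)^2 ≤ 4*((a*d)*(m*s)) := by rw [h2t]; nlinarith [ht2]
  have hE1sq : (a*m - d*s)^2 ≤ 0 := by nlinarith [hsq]
  have hE1 : a*m = d*s := by nlinarith [sq_nonneg (a*m - d*s), hE1sq]
  have hmk : m = (m+s)*d := by linear_combination h0*0 + hE1 - m*had
  have hsk : s = (m+s)*a := by linear_combination -hE1 - s*had
  have hms : m*s = (m+s)^2*(a*d) := by linear_combination s*hmk + (m+s)*d*hsk
  have ht : x*u+y*v = -((m+s)*(a*d)) := by linear_combination h0/2 - a*hmk + hE1/2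
  have hk2 : (m+s)^2*(x^2+y^2) ≤ (m+s)^2*(a*d) :=
    mul_le_mul_of_nonneg_left hz (sq_nonneg (m+s))
  have hexp : (u + (m+s)*x)^2 + (v + (m+s)*y)^2
      = (u^2+v^2) + (m+s)^2*(x^2+y^2) + 2*(m+s)*(x*u+y*v) := by ring
  have hlast : 2*(m+s)*(x*u+y*v) = -(2*((m+s)^2*(a*d))) := by rw [ht]; ring
  have hz5 : (u + (m+s)*x)^2 + (v + (m+s)*y)^2 ≤ 0 := by
    rw [hexp, hlast]; linarith [hw, hms, hk2]
  have h1 : u + (m+s)*x = 0 := by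
    have h1' : (u+(m+s)*x)^2 = 0 :=
      le_antisymm (by linarith [sq_nonneg (v+(m+s)*y)]) (sq_nonneg _)
    exact sq_eq_zero_iff.mp h1'
  have h2 : v + (m+s)*y = 0 := by
    have h2' : (v+(m+s)*y)^2 = 0 :=
      le_antisymm (by linarith [sq_nonneg (u+(m+s)*x)]) (sq_nonneg _)
    exact sq_eq_zero_iff.mp h2'
  exact ⟨hmk, hsk, by linarith, by linarith⟩

open ComplexConjugate in
lemma trace_mul_re (P Q : Matrix (Fin 2) (Fin 2) ℂ)
    (hP : P 1 0 = conj (P 0 1)) (hQ : Q 1 0 = conj (Q 0 1))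
    (hP0 : (P 0 0).im = 0) (hP1 : (P 1 1).im = 0)
    (hQ0 : (Q 0 0).im = 0) (hQ1 : (Q 1 1).im = 0) :
    ((P * Q).trace).re = (P 0 0).re * (Q 0 0).re + (P 1 1).re * (Q 1 1).re
      + 2*((P 0 1).re*(Q 0 1).re + (P 0 1).im*(Q 0 1).im) := by
  have h : (P * Q).trace = P 0 0 * Q 0 0 + P 0 1 * conj (Q 0 1)
      + (conj (P 0 1) * Q 0 1 + P 1 1 * Q 1 1) := by
    simp [Matrix.trace_fin_two, Matrix.mul_apply, Fin.sum_univ_two, hP, hQ]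
  rw [h]
  simp [Complex.add_re, Complex.mul_re, Complex.conj_re, Complex.conj_im, hP0, hP1, hQ0, hQ1]
  ring

lemma implC : QubitImplementable !![(1:ℝ),0,0;1,0,0;0,1/2,1/2] := by
  refine ⟨![!![1,0;0,0], !![1,0;0,0], !![0,0;0,1]],
          ![!![1,0;0,0], !![0,0;0,1/2], !![0,0;0,1/2]], ?_, ?_, ?_, ?_, ?_⟩
  · intro a
    fin_cases a <;>
      [exact psd2 1 0 0 (by norm_num) (by norm_num) (by norm_num);
       exact psd2 1 0 0 (by norm_num) (by norm_num) (by norm_num);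
       exact psd2 0 0 1 (by norm_num) (by norm_num) (by norm_num)]
  · intro a; fin_cases a <;> simp [Matrix.trace_fin_two]
  · intro b
    fin_cases b
    · exact psd2 1 0 0 (by norm_num) (by norm_num) (by norm_num)
    · have := psd2 0 0 (1/2) (by norm_num) (by norm_num) (by norm_num)
      convert this using 2 <;> norm_num
    · have := psd2 0 0 (1/2) (by norm_num) (by norm_num) (by norm_num)
      convert this using 2 <;> norm_num
  · rw [Fin.sum_univ_three]
    ext i j
    fin_cases i <;> fin_cases j <;> simp [Matrix.one_apply] <;> norm_num
  · intro a b
    fin_cases a <;> fin_cases b <;>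
      simp [Matrix.trace_fin_two, Matrix.mul_apply, Fin.sum_univ_two] <;> norm_num

lemma implC' : QubitImplementable !![(2:ℝ)/3,0,1/3;3/4,1/4,0;0,2/5,3/5] := by
  refine ⟨![!![1/2,1/2;1/2,1/2], !![1,0;0,0], !![1/10,-3/10;-3/10,9/10]],
          ![!![3/4,1/4;1/4,1/12], !![1/4,-1/4;-1/4,1/4], !![0,0;0,2/3]], ?_, ?_, ?_, ?_, ?_⟩
  · intro a
    fin_cases a
    · have := psd2 (1/2) (1/2) (1/2) (by norm_num) (by norm_num) (by norm_num)
      convert this using 2 <;> norm_num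
    · exact psd2 1 0 0 (by norm_num) (by norm_num) (by norm_num)
    · have := psd2 (1/10) (-3/10) (9/10) (by norm_num) (by norm_num) (by norm_num)
      convert this using 2 <;> norm_num
  · intro a; fin_cases a <;> simp [Matrix.trace_fin_two] <;> norm_num
  · intro b
    fin_cases b
    · have := psd2 (3/4) (1/4) (1/12) (by norm_num) (by norm_num) (by norm_num)
      convert this using 2 <;> norm_num
    · have := psd2 (1/4) (-1/4) (1/4) (by norm_num) (by norm_num) (by norm_num)
      convert this using 2 <;> norm_num
    · have := psd2 0 0 (2/3) (by norm_num) (by norm_num) (by norm_num)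
      convert this using 2 <;> norm_num
  · rw [Fin.sum_univ_three]
    ext i j
    fin_cases i <;> fin_cases j <;> simp [Matrix.one_apply] <;> norm_num
  · intro a b
    fin_cases a <;> fin_cases b <;>
      simp [Matrix.trace_fin_two, Matrix.mul_apply, Fin.sum_univ_two] <;> norm_num

/-- The set of 3×3 qubit-implementable communication matrices is not convex. -/
theorem qubit_comm_matrices_not_convex :
    ∃ C C' : Matrix (Fin 3) (Fin 3) ℝ, QubitImplementable C ∧ QubitImplementable C' ∧
      ¬ QubitImplementable ((1/2 : ℝ) • C + (1/2 : ℝ) • C') := by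
  refine ⟨!![(1:ℝ),0,0;1,0,0;0,1/2,1/2], !![(2:ℝ)/3,0,1/3;3/4,1/4,0;0,2/5,3/5],
    implC, implC', ?_⟩
  rintro ⟨ρ, M, hρP, hρtr, hMP, hMsum, hE⟩
  obtain ⟨cr1, ir1a, ir1d, pr1a, pr1d, dr1⟩ := psd_facts _ (hρP 0)
  obtain ⟨cr2, ir2a, ir2d, pr2a, pr2d, dr2⟩ := psd_facts _ (hρP 1)
  obtain ⟨cr3, ir3a, ir3d, pr3a, pr3d, dr3⟩ := psd_facts _ (hρP 2)
  obtain ⟨cm1, im1a, im1d, pm1a, pm1d, dm1⟩ := psd_facts _ (hMP 0)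
  obtain ⟨cm2, im2a, im2d, pm2a, pm2d, dm2⟩ := psd_facts _ (hMP 1)
  obtain ⟨cm3, im3a, im3d, pm3a, pm3d, dm3⟩ := psd_facts _ (hMP 2)
  have tr1 : (ρ 0 0 0).re + (ρ 0 1 1).re = 1 := by
    have h := congrArg Complex.re (hρtr 0); simpa [Matrix.trace_fin_two] using h
  have tr2 : (ρ 1 0 0).re + (ρ 1 1 1).re = 1 := by
    have h := congrArg Complex.re (hρtr 1); simpa [Matrix.trace_fin_two] using h
  have tr3 : (ρ 2 0 0).re + (ρ 2 1 1).re = 1 := by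
    have h := congrArg Complex.re (hρtr 2); simpa [Matrix.trace_fin_two] using h
  -- scalar entry equations
  have EE : ∀ a b, ((((1/2 : ℝ) • !![(1:ℝ),0,0;1,0,0;0,1/2,1/2]
        + (1/2 : ℝ) • !![(2:ℝ)/3,0,1/3;3/4,1/4,0;0,2/5,3/5]) a b : ℝ))
      = (ρ a 0 0).re * (M b 0 0).re + (ρ a 1 1).re * (M b 1 1).re
        + 2*((ρ a 0 1).re*(M b 0 1).re + (ρ a 0 1).im*(M b 0 1).im) := by
    intro a b
    have h := congrArg Complex.re (hE a b)
    rw [Complex.ofReal_re] at h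
    rw [h]
    fin_cases a <;> fin_cases b <;>
      [exact trace_mul_re _ _ cr1 cm1 ir1a ir1d im1a im1d;
       exact trace_mul_re _ _ cr1 cm2 ir1a ir1d im2a im2d;
       exact trace_mul_re _ _ cr1 cm3 ir1a ir1d im3a im3d;
       exact trace_mul_re _ _ cr2 cm1 ir2a ir2d im1a im1d;
       exact trace_mul_re _ _ cr2 cm2 ir2a ir2d im2a im2d;
       exact trace_mul_re _ _ cr2 cm3 ir2a ir2d im3a im3d;
       exact trace_mul_re _ _ cr3 cm1 ir3a ir3d im1a im1d;
       exact trace_mul_re _ _ cr3 cm2 ir3a ir3d im2a im2d;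
       exact trace_mul_re _ _ cr3 cm3 ir3a ir3d im3a im3d]
  have E00 := EE 0 0; have E01 := EE 0 1; have E02 := EE 0 2
  have E10 := EE 1 0; have E11 := EE 1 1; have E12 := EE 1 2
  have E20 := EE 2 0; have E21 := EE 2 1; have E22 := EE 2 2
  norm_num [Matrix.add_apply, Matrix.smul_apply, Matrix.cons_val_two, Matrix.tail_cons,
    Matrix.head_cons] at E00 E01 E02 E10 E11 E12 E20 E21 E22
  -- apply the rank-one forcing lemma to the three zero entries
  obtain ⟨K2a, K2b, K2c, K2d⟩ := key (ρ 0 0 0).re (ρ 0 1 1).re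
    (M 1 0 0).re (M 1 1 1).re (ρ 0 0 1).re (ρ 0 0 1).im (M 1 0 1).re (M 1 0 1).im
    tr1 dr1 dm2 (by linarith [E01])
  obtain ⟨K3a, K3b, K3c, K3d⟩ := key (ρ 1 0 0).re (ρ 1 1 1).re
    (M 2 0 0).re (M 2 1 1).re (ρ 1 0 1).re (ρ 1 0 1).im (M 2 0 1).re (M 2 0 1).im
    tr2 dr2 dm3 (by linarith [E12])
  obtain ⟨K1a, K1b, K1c, K1d⟩ := key (ρ 2 0 0).re (ρ 2 1 1).re
    (M 0 0 0).re (M 0 1 1).re (ρ 2 0 1).re (ρ 2 0 1).im (M 0 0 1).re (M 0 0 1).im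
    tr3 dr3 dm1 (by linarith [E20])
  set a1 := (ρ 0 0 0).re; set d1 := (ρ 0 1 1).re
  set x1 := (ρ 0 0 1).re; set y1 := (ρ 0 0 1).im
  set a2 := (ρ 1 0 0).re; set d2 := (ρ 1 1 1).re
  set x2 := (ρ 1 0 1).re; set y2 := (ρ 1 0 1).im
  set a3 := (ρ 2 0 0).re; set d3 := (ρ 2 1 1).re
  set x3 := (ρ 2 0 1).re; set y3 := (ρ 2 0 1).im
  set m1 := (M 0 0 0).re; set s1 := (M 0 1 1).re
  set u1 := (M 0 0 1).re; set v1 := (M 0 0 1).im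
  set m2 := (M 1 0 0).re; set s2 := (M 1 1 1).re
  set u2 := (M 1 0 1).re; set v2 := (M 1 0 1).im
  set m3 := (M 2 0 0).re; set s3 := (M 2 1 1).re
  set u3 := (M 2 0 1).re; set v3 := (M 2 0 1).im
  have G11 : (5/6 : ℝ) = (m1+s1)*(a1*d3 + d1*a3 - 2*(x1*x3+y1*y3)) := by
    linear_combination E00 + a1*K1a + d1*K1b + 2*x1*K1c + 2*y1*K1d
  have G21 : (7/8 : ℝ) = (m1+s1)*(a2*d3 + d2*a3 - 2*(x2*x3+y2*y3)) := by
    linear_combination E10 + a2*K1a + d2*K1b + 2*x2*K1c + 2*y2*K1d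
  have G22 : (1/8 : ℝ) = (m2+s2)*(a2*d1 + d2*a1 - 2*(x2*x1+y2*y1)) := by
    linear_combination E11 + a2*K2a + d2*K2b + 2*x2*K2c + 2*y2*K2d
  have G32 : (9/20 : ℝ) = (m2+s2)*(a3*d1 + d3*a1 - 2*(x3*x1+y3*y1)) := by
    linear_combination E21 + a3*K2a + d3*K2b + 2*x3*K2c + 2*y3*K2d
  have G02 : (1/6 : ℝ) = (m3+s3)*(a1*d2 + d1*a2 - 2*(x1*x2+y1*y2)) := by
    linear_combination E02 + a1*K3a + d1*K3b + 2*x1*K3c + 2*y1*K3d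
  have G33 : (11/20 : ℝ) = (m3+s3)*(a3*d2 + d3*a2 - 2*(x3*x2+y3*y2)) := by
    linear_combination E22 + a3*K3a + d3*K3b + 2*x3*K3c + 2*y3*K3d
  have final : (5/6 : ℝ)*((1/8)*(11/20)) = (7/8)*((9/20)*(1/6)) := by
    rw [G11, G22, G33, G21, G32, G02]; ring
  norm_num at final
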